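/- arXiv:1512.08295 — 2 statements merged into one kernel-verified Lean document; each statement's English description precedes it below -/
import Mathlib

section
/- Let M be a subset of the simple transpositions {s_1,…,s_{n−1}} and W_M ⊆ S_n the subgroup they generate. Let u_1,…,u_m ∈ W_M, let g_1,…,g_m ∈ ℤ[ε_1,…,ε_n] be homogeneous with deg(g_1)+⋯+deg(g_m) = ℓ(u_1)+⋯+ℓ(u_m), let h ∈ ℤ[ε_1,…,ε_n] be W_M-invariant and homogeneous of degree > 0, and let g' ∈ ℤ[ε_1,…,ε_n] be homogeneous with deg(h) + deg(g') = deg(g_m). Then ∂_{u_1}(g_1·∂_{u_2}(g_2·⋯·∂_{u_m}(g_m + h·g')⋯)) = ∂_{u_1}(g_1·∂_{u_2}(g_2·⋯·∂_{u_m}(g_m)⋯)). -/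
open MvPolynomial

/-- The adjacent transposition swapping `i` and `i+1` (0-indexed). -/
def sT (n : ℕ) (i : ℕ) : Equiv.Perm (Fin n) :=
  if h : i + 1 < n then Equiv.swap ⟨i, Nat.lt_of_succ_lt h⟩ ⟨i + 1, h⟩ else 1

/-- Product of a word in the simple transpositions. -/
def wordProd (n : ℕ) (l : List ℕ) : Equiv.Perm (Fin n) := (l.map (sT n)).prod

/-- Number of inversions = Coxeter length. -/
def invLen {n : ℕ} (w : Equiv.Perm (Fin n)) : ℕ :=
  (Finset.univ.filter fun p : Fin n × Fin n => p.1 < p.2 ∧ w p.2 < w p.1).card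

open Classical in
/-- The divided difference operator. -/
noncomputable def dd (n : ℕ) (i : ℕ) (f : MvPolynomial (Fin n) ℤ) : MvPolynomial (Fin n) ℤ :=
  if h : i + 1 < n then
    if hd : ∃ g : MvPolynomial (Fin n) ℤ,
        f - rename (⇑(sT n i)) f = (X ⟨i, Nat.lt_of_succ_lt h⟩ - X ⟨i + 1, h⟩) * g
    then hd.choose else 0
  else 0

open Classical in
noncomputable def ddList (n : ℕ) : List ℕ → MvPolynomial (Fin n) ℤ → MvPolynomial (Fin n) ℤ
  | [], f => f
  | i :: t, f => dd n i (ddList n t f)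

def IsReducedWord (n : ℕ) (l : List ℕ) (w : Equiv.Perm (Fin n)) : Prop :=
  (∀ i ∈ l, i + 1 < n) ∧ wordProd n l = w ∧ l.length = invLen w

noncomputable def nest (n : ℕ) :
    List (List ℕ) → List (MvPolynomial (Fin n) ℤ) → MvPolynomial (Fin n) ℤ
  | [], _ => 1
  | _ :: _, [] => 1
  | l :: ls, g :: gs => ddList n l (g * nest n ls gs)

noncomputable def xv (n j : ℕ) : MvPolynomial (Fin n) ℤ := if h : j < n then X ⟨j, h⟩ else 0

lemma perm_inv_apply_self' {α : Type*} (f : Equiv.Perm α) (x : α) : f⁻¹ (f x) = x :=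
  Equiv.symm_apply_apply f x

lemma perm_apply_inv_self' {α : Type*} (f : Equiv.Perm α) (x : α) : f (f⁻¹ x) = x :=
  Equiv.apply_symm_apply f x


lemma X_sub_X_ne {n : ℕ} {a b : Fin n} (hab : a ≠ b) :
    (X a - X b : MvPolynomial (Fin n) ℤ) ≠ 0 := by
  intro hcon
  have := sub_eq_zero.mp hcon
  exact hab (X_injective this)

lemma dd_exists (n : ℕ) (i : ℕ) (h : i + 1 < n) (f : MvPolynomial (Fin n) ℤ) :
    ∃ g : MvPolynomial (Fin n) ℤ,
      f - rename (⇑(sT n i)) f = (X ⟨i, Nat.lt_of_succ_lt h⟩ - X ⟨i + 1, h⟩) * g := by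
  set u : Fin n := ⟨i, Nat.lt_of_succ_lt h⟩
  set u' : Fin n := ⟨i + 1, h⟩
  have hs : sT n i = Equiv.swap u u' := by simp [sT, h]; rfl
  induction f using MvPolynomial.induction_on with
  | C a => exact ⟨0, by simp⟩
  | add p q hp hq =>
    obtain ⟨g1, hg1⟩ := hp; obtain ⟨g2, hg2⟩ := hq
    exact ⟨g1 + g2, by rw [map_add, mul_add, ← hg1, ← hg2]; ring⟩
  | mul_X p j hp =>
    obtain ⟨g, hg⟩ := hp
    have key : X (sT n i j) - X j = (X u - X u') * (if j = u then (-1) else if j = u' then 1 else 0 : MvPolynomial (Fin n) ℤ) := by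
      rw [hs]
      rcases eq_or_ne j u with rfl | hju
      · simp only [Equiv.swap_apply_left, if_true]; ring
      · rcases eq_or_ne j u' with rfl | hju'
        · simp [Equiv.swap_apply_right, hju]
        · simp [Equiv.swap_apply_of_ne_of_ne hju hju', hju, hju']
    refine ⟨g * X j - rename (⇑(sT n i)) p * (if j = u then (-1) else if j = u' then 1 else 0), ?_⟩
    have : p * X j - rename (⇑(sT n i)) (p * X j)
        = (p - rename (⇑(sT n i)) p) * X j - rename (⇑(sT n i)) p * (X (sT n i j) - X j) := by
      rw [map_mul, rename_X]; ring
    rw [this, hg, key]; ring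

lemma dd_spec (n : ℕ) (i : ℕ) (h : i + 1 < n) (f : MvPolynomial (Fin n) ℤ) :
    f - rename (⇑(sT n i)) f = (X ⟨i, Nat.lt_of_succ_lt h⟩ - X ⟨i + 1, h⟩) * dd n i f := by
  rw [dd, dif_pos h, dif_pos (dd_exists n i h f)]
  exact (dd_exists n i h f).choose_spec

lemma dd_eq (n : ℕ) (i : ℕ) (h : i + 1 < n) (f g : MvPolynomial (Fin n) ℤ)
    (hg : f - rename (⇑(sT n i)) f = (X ⟨i, Nat.lt_of_succ_lt h⟩ - X ⟨i + 1, h⟩) * g) :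
    dd n i f = g := by
  have h1 := dd_spec n i h f
  have hne : (X (⟨i, Nat.lt_of_succ_lt h⟩ : Fin n) - X ⟨i + 1, h⟩ : MvPolynomial (Fin n) ℤ) ≠ 0 :=
    X_sub_X_ne (by simp [Fin.ext_iff])
  exact mul_left_cancel₀ hne (h1 ▸ hg)

lemma dd_add (n : ℕ) (i : ℕ) (f g : MvPolynomial (Fin n) ℤ) :
    dd n i (f + g) = dd n i f + dd n i g := by
  by_cases h : i + 1 < n
  · refine dd_eq n i h _ _ ?_
    rw [map_add, mul_add, ← dd_spec n i h f, ← dd_spec n i h g]; ring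
  · simp [dd, h]

lemma dd_invariant (n : ℕ) (i : ℕ) (f : MvPolynomial (Fin n) ℤ)
    (hf : rename (⇑(sT n i)) f = f) : dd n i f = 0 := by
  by_cases h : i + 1 < n
  · exact dd_eq n i h _ _ (by rw [hf, mul_zero, sub_self])
  · simp [dd, h]

lemma dd_zero (n : ℕ) (i : ℕ) : dd n i 0 = 0 :=
  dd_invariant n i 0 (by simp)

lemma dd_mul_invariant (n : ℕ) (i : ℕ) (h f : MvPolynomial (Fin n) ℤ)
    (hh : rename (⇑(sT n i)) h = h) : dd n i (h * f) = h * dd n i f := by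
  by_cases hn : i + 1 < n
  · refine dd_eq n i hn _ _ ?_
    rw [map_mul, hh]
    rw [show h * f - h * rename (⇑(sT n i)) f = h * (f - rename (⇑(sT n i)) f) by ring,
      dd_spec n i hn f]; ring
  · simp [dd, hn]

lemma hom_of_mul {n : ℕ} (c g : MvPolynomial (Fin n) ℤ) (hc : c.IsHomogeneous 1) (hcne : c ≠ 0)
    (k : ℕ) (h : (c * g).IsHomogeneous (k + 1)) : g.IsHomogeneous k := by
  have memc : ∀ b : ℕ, c * homogeneousComponent b g ∈
      homogeneousSubmodule (Fin n) ℤ (b + 1) := by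
    intro b
    rw [mem_homogeneousSubmodule]
    simpa [add_comm] using hc.mul (homogeneousComponent_isHomogeneous b g)
  have comp : ∀ j : ℕ, homogeneousComponent (j + 1) (c * g) = c * homogeneousComponent j g := by
    intro j
    conv_lhs => rw [← sum_homogeneousComponent g, Finset.mul_sum, map_sum]
    rw [Finset.sum_eq_single j]
    · rw [homogeneousComponent_of_mem (memc j), if_pos rfl]
    · intro b _ hbj
      rw [homogeneousComponent_of_mem (memc b), if_neg (by omega)]
    · intro hj
      rw [homogeneousComponent_eq_zero j g (by simpa using hj), mul_zero, map_zero]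
  have hzero : ∀ j : ℕ, j ≠ k → homogeneousComponent j g = 0 := by
    intro j hjk
    have h1 : homogeneousComponent (j + 1) (c * g) = 0 := by
      rw [homogeneousComponent_of_mem ((mem_homogeneousSubmodule _ _).mpr h)]
      rw [if_neg (show ¬ (j + 1 = k + 1) by omega)]
    rw [comp j] at h1
    rcases mul_eq_zero.mp h1 with h2 | h2
    · exact absurd h2 hcne
    · exact h2
  have hg : g = homogeneousComponent k g := by
    conv_lhs => rw [← sum_homogeneousComponent g]
    rw [Finset.sum_eq_single k]
    · intro b _ hbk; exact hzero b hbk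
    · intro hk
      exact homogeneousComponent_eq_zero k g (by simpa using hk)
  rw [hg]
  exact homogeneousComponent_isHomogeneous k g

lemma eq_C_of_hom0 {n : ℕ} (f : MvPolynomial (Fin n) ℤ) (hf : f.IsHomogeneous 0) :
    f = C (coeff 0 f) := by
  have h0 := (totalDegree_zero_iff_isHomogeneous _).mpr hf
  rw [totalDegree_eq_zero_iff] at h0
  apply MvPolynomial.ext; intro d
  rcases eq_or_ne d 0 with rfl | hd
  · rw [coeff_C]; norm_num
  · rw [coeff_C, if_neg (Ne.symm hd)]
    by_contra hcd
    exact hd (Finsupp.ext fun x => h0 d (mem_support_iff.mpr hcd) x)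

lemma dd_hom {n : ℕ} (i : ℕ) (f : MvPolynomial (Fin n) ℤ) (e : ℕ)
    (hf : f.IsHomogeneous (e + 1)) : (dd n i f).IsHomogeneous e := by
  by_cases h : i + 1 < n
  · refine hom_of_mul (X ⟨i, Nat.lt_of_succ_lt h⟩ - X ⟨i + 1, h⟩) (dd n i f)
      ((isHomogeneous_X _ _).sub (isHomogeneous_X _ _))
      (X_sub_X_ne (by simp [Fin.ext_iff])) e ?_
    rw [← dd_spec n i h f]
    exact hf.sub (hf.rename_isHomogeneous)
  · simp only [dd, dif_neg h]
    exact isHomogeneous_zero _ _ _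

lemma dd_hom0 {n : ℕ} (i : ℕ) (f : MvPolynomial (Fin n) ℤ)
    (hf : f.IsHomogeneous 0) : dd n i f = 0 := by
  apply dd_invariant
  rw [eq_C_of_hom0 f hf, rename_C]

lemma ddList_zero {n : ℕ} (l : List ℕ) : ddList n l 0 = 0 := by
  induction l with
  | nil => rfl
  | cons a t ih => show dd n a (ddList n t 0) = 0; rw [ih, dd_zero]

lemma ddList_add {n : ℕ} (l : List ℕ) (f g : MvPolynomial (Fin n) ℤ) :
    ddList n l (f + g) = ddList n l f + ddList n l g := by
  induction l with
  | nil => rfl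
  | cons a t ih => show dd n a (ddList n t (f+g)) = _; rw [ih, dd_add]; rfl

lemma ddList_hom {n : ℕ} (l : List ℕ) (f : MvPolynomial (Fin n) ℤ) (e : ℕ)
    (hf : f.IsHomogeneous (e + l.length)) : (ddList n l f).IsHomogeneous e := by
  induction l generalizing e with
  | nil => simpa [ddList] using hf
  | cons a t ih =>
    show (dd n a (ddList n t f)).IsHomogeneous e
    have he : e + (a :: t).length = (e + 1) + t.length := by simp; omega
    exact dd_hom a _ e (ih (e + 1) (he ▸ hf))

lemma ddList_kill {n : ℕ} (l : List ℕ) (f : MvPolynomial (Fin n) ℤ) (d : ℕ)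
    (hf : f.IsHomogeneous d) (hd : d < l.length) : ddList n l f = 0 := by
  induction l with
  | nil => simp at hd
  | cons a t ih =>
    show dd n a (ddList n t f) = 0
    rcases Nat.lt_or_ge d t.length with h | h
    · rw [ih h, dd_zero]
    · have : d = t.length := le_antisymm (by simpa using Nat.lt_succ_iff.mp hd) h
      exact dd_hom0 a _ (ddList_hom t f 0 (by simpa [this] using hf))

lemma ddList_mul_invariant {n : ℕ} (l : List ℕ) (h f : MvPolynomial (Fin n) ℤ)
    (hh : ∀ a ∈ l, rename (⇑(sT n a)) h = h) :
    ddList n l (h * f) = h * ddList n l f := by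
  induction l with
  | nil => rfl
  | cons a t ih =>
    show dd n a (ddList n t (h * f)) = h * dd n a (ddList n t f)
    rw [ih (fun b hb => hh b (List.mem_cons_of_mem a hb)),
      dd_mul_invariant n a h _ (hh a (List.mem_cons_self))]

lemma swap_lt_iff {n : ℕ} (u u' : Fin n) (hadj : (u : ℕ) + 1 = (u' : ℕ)) (a b : Fin n) :
    (Equiv.swap u u' b < Equiv.swap u u' a) ↔
      ((b < a) ↔ ¬((a = u ∧ b = u') ∨ (a = u' ∧ b = u))) := by
  simp only [Equiv.swap_apply_def]
  split_ifs <;>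
    simp only [Fin.lt_def, Fin.ext_iff, eq_self_iff_true, not_or, not_and] at * <;> omega

lemma wordProd_cons (n : ℕ) (a : ℕ) (t : List ℕ) :
    wordProd n (a :: t) = sT n a * wordProd n t := by
  simp [wordProd]

lemma invLen_swap_mul {n : ℕ} (a : ℕ) (h : a + 1 < n) (v : Equiv.Perm (Fin n))
    (hc : v⁻¹ ⟨a, Nat.lt_of_succ_lt h⟩ < v⁻¹ ⟨a + 1, h⟩) :
    invLen (sT n a * v) = invLen v + 1 := by
  set u : Fin n := ⟨a, Nat.lt_of_succ_lt h⟩ with hu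
  set u' : Fin n := ⟨a + 1, h⟩ with hu'
  have hs : sT n a = Equiv.swap u u' := by simp [sT, h, hu, hu']
  have key : ∀ p q : Fin n, ((sT n a * v) q < (sT n a * v) p) ↔
      ((v q < v p) ↔ ¬((v p = u ∧ v q = u') ∨ (v p = u' ∧ v q = u))) := by
    intro p q
    rw [hs]
    exact swap_lt_iff u u' rfl (v p) (v q)
  have huu' : u < u' := by simp [Fin.lt_def, hu, hu']
  set p₀ := v⁻¹ u with hp₀
  set q₀ := v⁻¹ u' with hq₀
  have hvp₀ : v p₀ = u := perm_apply_inv_self' v u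
  have hvq₀ : v q₀ = u' := perm_apply_inv_self' v u'
  have hset : (Finset.univ.filter fun p : Fin n × Fin n =>
        p.1 < p.2 ∧ (sT n a * v) p.2 < (sT n a * v) p.1)
      = insert (p₀, q₀) (Finset.univ.filter fun p : Fin n × Fin n =>
        p.1 < p.2 ∧ v p.2 < v p.1) := by
    ext ⟨p, q⟩
    simp only [Finset.mem_insert, Finset.mem_filter, Finset.mem_univ, true_and, Prod.mk.injEq]
    constructor
    · rintro ⟨hpq, hlt⟩
      rw [key] at hlt
      by_cases h1 : v p = u ∧ v q = u'
      · left
        constructor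
        · rw [hp₀, ← h1.1, perm_inv_apply_self']
        · rw [hq₀, ← h1.2, perm_inv_apply_self']
      · by_cases h2 : v p = u' ∧ v q = u
        · exfalso
          have hp : p = q₀ := by rw [hq₀, ← h2.1, perm_inv_apply_self']
          have hq : q = p₀ := by rw [hp₀, ← h2.2, perm_inv_apply_self']
          rw [hp, hq] at hpq
          exact absurd hc (not_lt.mpr (le_of_lt hpq))
        · right
          exact ⟨hpq, hlt.mpr (by tauto)⟩
    · rintro (⟨hp, hq⟩ | ⟨hpq, hvlt⟩)
      · subst hp; subst hq
        refine ⟨hc, ?_⟩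
        rw [key, hvp₀, hvq₀]
        constructor
        · intro hlt; exact absurd hlt (not_lt.mpr (le_of_lt huu'))
        · intro hcon; exact absurd (Or.inl ⟨rfl, rfl⟩) hcon
      · refine ⟨hpq, ?_⟩
        rw [key]
        constructor
        · intro _
          rintro (⟨h1, h2⟩ | ⟨h1, h2⟩)
          · rw [h1, h2] at hvlt
            exact absurd hvlt (not_lt.mpr (le_of_lt huu'))
          · have hp : p = q₀ := by rw [hq₀, ← h1, perm_inv_apply_self']
            have hq : q = p₀ := by rw [hp₀, ← h2, perm_inv_apply_self']
            rw [hp, hq] at hpq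
            exact absurd hc (not_lt.mpr (le_of_lt hpq))
        · intro _; exact hvlt
  have hnotmem : (p₀, q₀) ∉ (Finset.univ.filter fun p : Fin n × Fin n =>
      p.1 < p.2 ∧ v p.2 < v p.1) := by
    simp only [Finset.mem_filter, Finset.mem_univ, true_and, not_and]
    intro _
    rw [hvp₀, hvq₀]
    exact not_lt.mpr (le_of_lt huu')
  unfold invLen
  rw [hset, Finset.card_insert_of_notMem hnotmem]

lemma invLen_swap_mul' {n : ℕ} (a : ℕ) (h : a + 1 < n) (v : Equiv.Perm (Fin n))
    (hc : v⁻¹ ⟨a + 1, h⟩ < v⁻¹ ⟨a, Nat.lt_of_succ_lt h⟩) :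
    invLen v = invLen (sT n a * v) + 1 := by
  have hs : sT n a = Equiv.swap ⟨a, Nat.lt_of_succ_lt h⟩ ⟨a + 1, h⟩ := by simp [sT, h]
  have hinv : sT n a * (sT n a * v) = v := by
    rw [← mul_assoc, hs, Equiv.swap_mul_self, one_mul]
  have := invLen_swap_mul a h (sT n a * v) (by
    rw [mul_inv_rev, hs]
    simp only [Equiv.Perm.mul_apply]
    rw [Equiv.swap_inv, Equiv.swap_apply_left, Equiv.swap_apply_right]
    exact hc)
  rw [hinv] at this
  exact this

lemma invLen_wordProd_le (n : ℕ) (l : List ℕ) : invLen (wordProd n l) ≤ l.length := by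
  induction l with
  | nil =>
    simp only [List.length_nil, Nat.le_zero]
    unfold invLen
    rw [Finset.card_eq_zero]
    ext ⟨p, q⟩
    simp only [Finset.mem_filter, Finset.mem_univ, true_and, Finset.notMem_empty, iff_false,
      not_and]
    intro hpq
    show ¬ (wordProd n []) q < (wordProd n []) p
    simp [wordProd]
    exact le_of_lt hpq
  | cons a t ih =>
    rw [wordProd_cons]
    by_cases h : a + 1 < n
    · have hne : (wordProd n t)⁻¹ ⟨a, Nat.lt_of_succ_lt h⟩ ≠ (wordProd n t)⁻¹ ⟨a + 1, h⟩ := by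
        intro hcon
        have := (wordProd n t)⁻¹.injective hcon
        simp [Fin.ext_iff] at this
      rcases lt_or_gt_of_ne hne with hlt | hgt
      · rw [invLen_swap_mul a h _ hlt]
        simpa using ih
      · have := invLen_swap_mul' a h (wordProd n t) hgt
        simp only [List.length_cons]
        omega
    · simp only [sT, dif_neg h, one_mul, List.length_cons]
      omega

def Pfix (n : ℕ) (i : ℕ) (w : Equiv.Perm (Fin n)) : Prop :=
  ∀ p : Fin n, (p : ℕ) ≤ i → ((w p : ℕ) ≤ i)

lemma Pfix_one (n i : ℕ) : Pfix n i 1 := fun p hp => hp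

lemma Pfix_mul {n i : ℕ} {w v : Equiv.Perm (Fin n)} (hw : Pfix n i w) (hv : Pfix n i v) :
    Pfix n i (w * v) := fun p hp => hw (v p) (hv p hp)

lemma Pfix_inv {n i : ℕ} {w : Equiv.Perm (Fin n)} (hw : Pfix n i w) : Pfix n i w⁻¹ := by
  intro q hq
  classical
  set S : Finset (Fin n) := Finset.univ.filter fun p => (p : ℕ) ≤ i with hS
  have hsub : S.image w ⊆ S := by
    intro x hx
    simp only [Finset.mem_image, hS, Finset.mem_filter, Finset.mem_univ, true_and] at hx ⊢
    obtain ⟨p, hp, rfl⟩ := hx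
    exact hw p hp
  have heq : S.image w = S :=
    Finset.eq_of_subset_of_card_le hsub
      (le_of_eq (Finset.card_image_of_injective S w.injective).symm)
  have hqS : q ∈ S := by simp [hS, hq]
  rw [← heq] at hqS
  simp only [Finset.mem_image, hS, Finset.mem_filter, Finset.mem_univ, true_and] at hqS
  obtain ⟨p, hp, hwp⟩ := hqS
  rw [← hwp, perm_inv_apply_self']
  exact hp

lemma Pfix_sT {n i a : ℕ} (hai : a ≠ i) : Pfix n i (sT n a) := by
  by_cases h : a + 1 < n
  · intro p hp
    simp only [sT, dif_pos h, Equiv.swap_apply_def]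
    split_ifs with h1 h2 <;> simp_all [Fin.ext_iff] <;> omega
  · simp only [sT, dif_neg h]
    exact Pfix_one n i

lemma not_mem_reduced {n : ℕ} (l : List ℕ) (hl : ∀ a ∈ l, a + 1 < n)
    (hred : l.length = invLen (wordProd n l)) (i : ℕ) (hP : Pfix n i (wordProd n l)) :
    i ∉ l := by
  induction l with
  | nil => simp
  | cons a t ih =>
    have ha : a + 1 < n := hl a (List.mem_cons_self)
    set v := wordProd n t with hv
    set w := wordProd n (a :: t) with hw
    have hwv : w = sT n a * v := wordProd_cons n a t
    set u : Fin n := ⟨a, Nat.lt_of_succ_lt ha⟩ with hu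
    set u' : Fin n := ⟨a + 1, ha⟩ with hu'
    have hle_t : invLen v ≤ t.length := invLen_wordProd_le n t
    have hne : v⁻¹ u ≠ v⁻¹ u' := by
      intro hcon
      have := v⁻¹.injective hcon
      simp [hu, hu', Fin.ext_iff] at this
    have hs : sT n a = Equiv.swap u u' := by simp [sT, ha, hu, hu']
    rcases lt_or_gt_of_ne hne with hlt | hgt
    · -- reduced case
      have hlv : invLen w = invLen v + 1 := by rw [hwv]; exact invLen_swap_mul a ha v hlt
      have htred : t.length = invLen v := by
        have h1 : t.length + 1 = invLen w := by simpa using hred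
        omega
      have hai : a ≠ i := by
        intro rfl_ai
        subst rfl_ai
        -- a = i
        have hPinv := Pfix_inv hP
        have h1 : ((w⁻¹ u : Fin n) : ℕ) ≤ a := hPinv u (le_refl a)
        have h2 : ¬ ((w⁻¹ u' : Fin n) : ℕ) ≤ a := by
          intro hcon
          have := hP (w⁻¹ u') hcon
          rw [perm_apply_inv_self'] at this
          simp [hu'] at this
        have hvw : v = sT n a * w := by
          rw [hwv, ← mul_assoc, hs, Equiv.swap_mul_self, one_mul]
        have hv1 : v⁻¹ u = w⁻¹ u' := by
          rw [hvw, mul_inv_rev, hs]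
          simp only [Equiv.Perm.mul_apply]
          rw [Equiv.swap_inv, Equiv.swap_apply_left]
        have hv2 : v⁻¹ u' = w⁻¹ u := by
          rw [hvw, mul_inv_rev, hs]
          simp only [Equiv.Perm.mul_apply]
          rw [Equiv.swap_inv, Equiv.swap_apply_right]
        rw [hv1, hv2] at hlt
        have : ((w⁻¹ u' : Fin n) : ℕ) < ((w⁻¹ u : Fin n) : ℕ) := hlt
        omega
      have hPv : Pfix n i v := by
        have hvw : v = sT n a * w := by
          rw [hwv, ← mul_assoc, hs, Equiv.swap_mul_self, one_mul]
        rw [hvw]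
        exact Pfix_mul (Pfix_sT hai) hP
      have hit : i ∉ t := ih (fun b hb => hl b (List.mem_cons_of_mem a hb)) htred hPv
      simp only [List.mem_cons, not_or]
      exact ⟨fun hcon => hai hcon.symm, hit⟩
    · -- contradiction : length too long
      exfalso
      have := invLen_swap_mul' a ha v hgt
      rw [← hwv] at this
      have h1 : t.length + 1 = invLen w := by simpa using hred
      omega

lemma sT_mem_closure {n : ℕ} (M : Set ℕ) (u : Equiv.Perm (Fin n))
    (hu : u ∈ Subgroup.closure ((fun i => sT n i) '' M))
    (l : List ℕ) (hrw : IsReducedWord n l u) :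
    ∀ a ∈ l, sT n a ∈ Subgroup.closure ((fun i => sT n i) '' M) := by
  intro a hal
  by_cases haM : a ∈ M
  · exact Subgroup.subset_closure ⟨a, haM, rfl⟩
  · exfalso
    have hP : Pfix n a u := by
      refine Subgroup.closure_induction (fun x hx => ?_) (Pfix_one n a)
        (fun x y _ _ hx hy => Pfix_mul hx hy) (fun x _ hx => Pfix_inv hx) hu
      obtain ⟨m, hmM, rfl⟩ := hx
      exact Pfix_sT (fun hcon => haM (hcon ▸ hmM))
    obtain ⟨hl, hwp, hlen⟩ := hrw
    exact (not_mem_reduced l hl (by rw [hwp]; exact hlen) a (by rw [hwp]; exact hP)) hal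

lemma forall₂_mem_left {α β : Type*} {R : α → β → Prop} :
    ∀ {l1 : List α} {l2 : List β}, List.Forall₂ R l1 l2 → ∀ a ∈ l1, ∃ b ∈ l2, R a b := by
  intro l1 l2 h
  induction h with
  | nil => intro a ha; simp at ha
  | cons hab htail ih =>
    intro x hx
    rcases List.mem_cons.mp hx with rfl | hx'
    · exact ⟨_, List.mem_cons_self, hab⟩
    · obtain ⟨b, hb, hrb⟩ := ih x hx'
      exact ⟨b, List.mem_cons_of_mem _ hb, hrb⟩


lemma nest_cons (n : ℕ) (l : List ℕ) (ls : List (List ℕ)) (g : MvPolynomial (Fin n) ℤ)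
    (gs : List (MvPolynomial (Fin n) ℤ)) :
    nest n (l :: ls) (g :: gs) = ddList n l (g * nest n ls gs) := rfl

lemma nest_add (n : ℕ) : ∀ (gs : List (MvPolynomial (Fin n) ℤ)) (ls : List (List ℕ))
    (x y : MvPolynomial (Fin n) ℤ), ls.length = gs.length + 1 →
    nest n ls (gs ++ [x + y]) = nest n ls (gs ++ [x]) + nest n ls (gs ++ [y]) := by
  intro gs
  induction gs with
  | nil =>
    intro ls x y hlen
    match ls, hlen with
    | [l], _ =>
      show ddList n l ((x + y) * nest n [] []) = ddList n l (x * nest n [] []) + ddList n l (y * nest n [] [])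
      rw [add_mul, ddList_add]
  | cons g gs' ih =>
    intro ls x y hlen
    match ls, hlen with
    | l :: ls', hlen =>
      have hlen' : ls'.length = gs'.length + 1 := by simpa using hlen
      show ddList n l (g * nest n ls' (gs' ++ [x + y])) = _
      rw [ih ls' x y hlen', mul_add, ddList_add]
      rfl

lemma nest_pull (n : ℕ) (h : MvPolynomial (Fin n) ℤ) :
    ∀ (gs : List (MvPolynomial (Fin n) ℤ)) (ls : List (List ℕ))
    (f : MvPolynomial (Fin n) ℤ), ls.length = gs.length + 1 →
    (∀ l ∈ ls, ∀ a ∈ l, rename (⇑(sT n a)) h = h) →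
    nest n ls (gs ++ [h * f]) = h * nest n ls (gs ++ [f]) := by
  intro gs
  induction gs with
  | nil =>
    intro ls f hlen hinv
    match ls, hlen with
    | [l], _ =>
      show ddList n l ((h * f) * nest n [] []) = h * ddList n l (f * nest n [] [])
      rw [mul_assoc, ddList_mul_invariant l h _ (hinv l (List.mem_cons_self))]
  | cons g gs' ih =>
    intro ls f hlen hinv
    match ls, hlen with
    | l :: ls', hlen =>
      have hlen' : ls'.length = gs'.length + 1 := by simpa using hlen
      show ddList n l (g * nest n ls' (gs' ++ [h * f])) = h * ddList n l (g * nest n ls' (gs' ++ [f]))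
      rw [ih ls' f hlen' (fun l' hl' => hinv l' (List.mem_cons_of_mem _ hl')),
        show g * (h * nest n ls' (gs' ++ [f])) = h * (g * nest n ls' (gs' ++ [f])) by ring,
        ddList_mul_invariant l h _ (hinv l (List.mem_cons_self))]

lemma nest_hom_kill (n : ℕ) : ∀ (ls : List (List ℕ)) (us : List (Equiv.Perm (Fin n)))
    (gs : List (MvPolynomial (Fin n) ℤ)) (ds : List ℕ),
    List.Forall₂ (fun l u => IsReducedWord n l u) ls us →
    List.Forall₂ (fun g d => MvPolynomial.IsHomogeneous g d) gs ds →
    ls.length = gs.length →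
    (∀ e : ℕ, ds.sum = (us.map invLen).sum + e → (nest n ls gs).IsHomogeneous e) ∧
    (ds.sum < (us.map invLen).sum → nest n ls gs = 0) := by
  intro ls us gs ds h1
  induction h1 generalizing gs ds with
  | nil =>
    intro h2 hlen
    match gs, hlen with
    | [], _ =>
      cases h2
      constructor
      · intro e he
        simp only [List.sum_nil, List.map_nil] at he
        show (1 : MvPolynomial (Fin n) ℤ).IsHomogeneous e
        rw [show e = 0 by omega]
        exact isHomogeneous_one _ _
      · intro hcon; simp at hcon
  | @cons l u ls' us' hlu htail ih =>
    intro h2 hlen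
    match gs, hlen with
    | g :: gs', hlen =>
      cases h2 with
      | cons hgd h2' =>
        rename_i d ds'
        have hlen' : ls'.length = gs'.length := by simpa using hlen
        obtain ⟨ihhom, ihkill⟩ := ih gs' ds' h2' hlen'
        have hlred : l.length = invLen u := hlu.2.2
        constructor
        · intro e he
          simp only [List.sum_cons, List.map_cons] at he
          rcases Nat.lt_or_ge ds'.sum ((us'.map invLen).sum) with hc | hc
          · rw [nest_cons, ihkill hc, mul_zero, ddList_zero]
            exact isHomogeneous_zero _ _ _
          · set e' := ds'.sum - (us'.map invLen).sum with he'
            have hinner := ihhom e' (by omega)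
            rw [nest_cons]
            refine ddList_hom l _ e ?_
            have : d + e' = e + l.length := by rw [hlred]; omega
            exact this ▸ hgd.mul hinner
        · intro hlt
          simp only [List.sum_cons, List.map_cons] at hlt
          rcases Nat.lt_or_ge ds'.sum ((us'.map invLen).sum) with hc | hc
          · rw [nest_cons, ihkill hc, mul_zero, ddList_zero]
          · set e' := ds'.sum - (us'.map invLen).sum with he'
            have hinner := ihhom e' (by omega)
            rw [nest_cons]
            exact ddList_kill l _ (d + e') (hgd.mul hinner) (by omega)

/-- with `u_1,…,u_m ∈ W_M`, `g_i` homogeneous with total degree equal to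
`Σ ℓ(u_i)`, `h` a `W_M`-invariant homogeneous polynomial of positive degree and `g'`
homogeneous with `deg h + deg g' = deg g_m`, one has
`∂_{u_1}(g_1·⋯·∂_{u_m}(g_m + h·g')⋯) = ∂_{u_1}(g_1·⋯·∂_{u_m}(g_m)⋯)`. -/
theorem stmt7 (n : ℕ) (M : Set ℕ) (hM : ∀ i ∈ M, i + 1 < n)
    (us : List (Equiv.Perm (Fin n))) (ls : List (List ℕ))
    (hus : ∀ u ∈ us, u ∈ Subgroup.closure ((fun i => sT n i) '' M))
    (hred : List.Forall₂ (fun l u => IsReducedWord n l u) ls us)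
    (gs : List (MvPolynomial (Fin n) ℤ)) (ds : List ℕ)
    (hhom : List.Forall₂ (fun g d => MvPolynomial.IsHomogeneous g d) gs ds)
    (gm : MvPolynomial (Fin n) ℤ) (dm : ℕ) (hgm : gm.IsHomogeneous dm)
    (hglen : gs.length + 1 = us.length)
    (hsum : ds.sum + dm = (us.map invLen).sum)
    (h : MvPolynomial (Fin n) ℤ) (dh : ℕ) (hh : h.IsHomogeneous dh) (hdh : 0 < dh)
    (hinv : ∀ u ∈ Subgroup.closure ((fun i => sT n i) '' M), rename (⇑u) h = h)
    (g' : MvPolynomial (Fin n) ℤ) (d' : ℕ) (hg' : g'.IsHomogeneous d')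
    (hdeg : dh + d' = dm) :
    nest n ls (gs ++ [gm + h * g']) = nest n ls (gs ++ [gm]) := by
  have hlslen : ls.length = us.length := List.Forall₂.length_eq hred
  have hlen1 : ls.length = gs.length + 1 := by omega
  have hinvL : ∀ l ∈ ls, ∀ a ∈ l, rename (⇑(sT n a)) h = h := by
    intro l hl a ha
    obtain ⟨u, hu, hru⟩ := forall₂_mem_left hred l hl
    exact hinv (sT n a) (sT_mem_closure M u (hus u hu) l hru a ha)
  have hkill : nest n ls (gs ++ [g']) = 0 := by
    refine (nest_hom_kill n ls us (gs ++ [g']) (ds ++ [d']) hred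
      (List.rel_append hhom (List.forall₂_cons.mpr ⟨hg', List.Forall₂.nil⟩))
      (by simp [hlen1])).2 ?_
    simp only [List.sum_append, List.sum_cons, List.sum_nil]
    omega
  rw [nest_add n gs ls gm (h * g') hlen1, nest_pull n h gs ls g' hlen1 hinvL, hkill,
    mul_zero, add_zero]
end

section
/- The word x̄ = w̄_m z̄_m w̄_{m−1} z̄_{m−1} ⋯ w̄_1 z̄_1 is a reduced expression: the Coxeter length of its product x ∈ S_N equals the total number of letters of x̄. -/
set_option maxHeartbeats 1000000


/-- `b_i = a_1 + ⋯ + a_i` (with `a_{j+1} = as j`). -/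
def bsum (as : ℕ → ℕ) (i : ℕ) : ℕ := ∑ j ∈ Finset.range i, as j

/-- The word `w̄_{i+1} = (s_{k_{i+1}}, …, s_{n−1})`, 0-indexed: letters
`cs i, cs i + 1, …, n − 2` where `cs i = k_{i+1} − 1`. -/
def wbar (n : ℕ) (cs : ℕ → ℕ) (i : ℕ) : List ℕ := List.range' (cs i) (n - 1 - cs i)

/-- The word `z̄_{i+1}`: the concatenation, for `j` running from `b_{i+1} − 1` down to
`b_i`, of the blocks `(s_n, s_{n+1}, …, s_{n+j})` (0-indexed letters
`n − 1, n, …, n − 1 + j`). -/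
def zbar (n : ℕ) (as : ℕ → ℕ) (i : ℕ) : List ℕ :=
  ((List.range (as i)).map fun t => List.range' (n - 1) (bsum as (i + 1) - t)).flatten

/-- The concatenated word `x̄ = w̄_m z̄_m w̄_{m−1} z̄_{m−1} ⋯ w̄_1 z̄_1`. -/
def xbar (n m : ℕ) (cs as : ℕ → ℕ) : List ℕ :=
  ((List.range m).map fun t => wbar n cs (m - 1 - t) ++ zbar n as (m - 1 - t)).flatten


lemma sT_eq {N i : ℕ} (h : i + 1 < N) :
    sT N i = Equiv.swap ⟨i, Nat.lt_of_succ_lt h⟩ ⟨i + 1, h⟩ := dif_pos h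

lemma invLen_one (N : ℕ) : invLen (1 : Equiv.Perm (Fin N)) = 0 := by
  rw [invLen, Finset.card_eq_zero, Finset.filter_eq_empty_iff]
  rintro ⟨p, q⟩ _ ⟨h1, h2⟩
  simp only [Equiv.Perm.one_apply] at h2
  exact absurd h1 (not_lt.2 h2.le)

lemma swap_val {N : ℕ} (a b x : Fin N) :
    (Equiv.swap a b x).val = if x = a then b.val else if x = b then a.val else x.val := by
  rw [Equiv.swap_apply_def]
  split_ifs <;> rfl

lemma invLen_mul_sT {N : ℕ} (j : ℕ) (hj : j + 1 < N) (u : Equiv.Perm (Fin N))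
    (h : u ⟨j, by omega⟩ < u ⟨j + 1, hj⟩) :
    invLen (u * sT N j) = invLen u + 1 := by
  set a : Fin N := ⟨j, by omega⟩ with ha
  set b : Fin N := ⟨j + 1, hj⟩ with hb
  have hab : a < b := by simp [ha, hb, Fin.lt_def]
  set s := Equiv.swap a b with hs
  have hsT : sT N j = s := by rw [hs]; exact sT_eq hj
  set S : Finset (Fin N × Fin N) :=
    Finset.univ.filter fun p : Fin N × Fin N => p.1 < p.2 ∧ u p.2 < u p.1 with hS
  set S' : Finset (Fin N × Fin N) :=
    Finset.univ.filter fun p : Fin N × Fin N => p.1 < p.2 ∧ (u * sT N j) p.2 < (u * sT N j) p.1 with hS'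
  have hmem : ∀ p q : Fin N, (p, q) ∈ S' ↔ (p < q ∧ u (s q) < u (s p)) := by
    intro p q
    simp [hS', hsT, Equiv.Perm.mul_apply]
  have hmemS : ∀ p q : Fin N, (p, q) ∈ S ↔ (p < q ∧ u q < u p) := by
    intro p q; simp [hS]
  -- key order fact about s
  have key : ∀ p q : Fin N, p < q → ¬(p = a ∧ q = b) → s p < s q := by
    intro p q hpq hne
    rw [Fin.lt_def, swap_val, swap_val]
    rw [Fin.lt_def] at hpq
    have hxa : ∀ x : Fin N, x = a ↔ x.val = j := fun x => Fin.ext_iff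
    have hxb : ∀ x : Fin N, x = b ↔ x.val = j + 1 := fun x => Fin.ext_iff
    have hne' : ¬(p.val = j ∧ q.val = j + 1) := by
      intro ⟨h1, h2⟩; exact hne ⟨(hxa p).2 h1, (hxb q).2 h2⟩
    have hav : (a : ℕ) = j := rfl
    have hbv : (b : ℕ) = j + 1 := rfl
    split_ifs with h1 h2 h3 h4 h5 h6 h7 h8 <;>
      simp only [hxa, hxb] at * <;> omega
  have hg : Function.Injective (fun p : Fin N × Fin N => (s p.1, s p.2)) := by
    intro x y hxy
    simp only [Prod.mk.injEq] at hxy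
    exact Prod.ext (s.injective hxy.1) (s.injective hxy.2)
  have habS' : (a, b) ∈ S' := by
    rw [hmem]
    refine ⟨hab, ?_⟩
    rw [Equiv.swap_apply_left, Equiv.swap_apply_right]
    exact h
  have hset : S' = insert (a, b) (S.image fun p : Fin N × Fin N => (s p.1, s p.2)) := by
    ext ⟨p, q⟩
    constructor
    · intro hpq
      rw [hmem] at hpq
      rcases Classical.em (p = a ∧ q = b) with hc | hc
      · exact Finset.mem_insert.2 (Or.inl (by rw [hc.1, hc.2]))
      · refine Finset.mem_insert.2 (Or.inr ?_)
        refine Finset.mem_image.2 ⟨(s p, s q), ?_, ?_⟩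
        · rw [hmemS]
          exact ⟨key p q hpq.1 hc, hpq.2⟩
        · simp [hs, Equiv.swap_apply_self]
    · intro hpq
      rcases Finset.mem_insert.1 hpq with hc | hc
      · simp only [Prod.mk.injEq] at hc
        rw [hmem, hc.1, hc.2]
        refine ⟨hab, ?_⟩
        rw [Equiv.swap_apply_left, Equiv.swap_apply_right]
        exact h
      · obtain ⟨⟨r, t⟩, hrt, heq⟩ := Finset.mem_image.1 hc
        rw [hmemS] at hrt
        simp only [Prod.mk.injEq] at heq
        rw [hmem, ← heq.1, ← heq.2]
        constructor
        · refine key r t hrt.1 ?_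
          rintro ⟨h1, h2⟩
          rw [h1, h2] at hrt
          exact absurd h (not_lt.2 hrt.2.le)
        · rw [Equiv.swap_apply_self, Equiv.swap_apply_self]
          exact hrt.2
  have hnotmem : (a, b) ∉ S.image fun p : Fin N × Fin N => (s p.1, s p.2) := by
    intro hc
    obtain ⟨⟨r, t⟩, hrt, heq⟩ := Finset.mem_image.1 hc
    simp only [Prod.mk.injEq] at heq
    rw [hmemS] at hrt
    have hr : r = b := by
      have h2 := congrArg s heq.1
      simp only [hs, Equiv.swap_apply_self, Equiv.swap_apply_left] at h2
      exact h2
    have ht : t = a := by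
      have h2 := congrArg s heq.2
      simp only [hs, Equiv.swap_apply_self, Equiv.swap_apply_right] at h2
      exact h2
    rw [hr, ht] at hrt
    exact absurd (hrt.1.trans hab) (lt_irrefl b)
  have : invLen (u * sT N j) = S'.card := rfl
  rw [this, hset, Finset.card_insert_of_notMem hnotmem,
    Finset.card_image_of_injective _ hg]
  rfl

lemma wordProd_append (N : ℕ) (l1 l2 : List ℕ) :
    wordProd N (l1 ++ l2) = wordProd N l1 * wordProd N l2 := by
  simp [wordProd, List.map_append, List.prod_append]

lemma wordProd_nil (N : ℕ) : wordProd N [] = 1 := rfl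

lemma wordProd_singleton (N : ℕ) (j : ℕ) : wordProd N [j] = sT N j := by
  simp [wordProd]

lemma move_lemma (N : ℕ) (j : ℕ) : ∀ (k : ℕ), ∀ (hjk : j + k < N) (u : Equiv.Perm (Fin N)),
    (∀ t : Fin N, j < t.val → t.val ≤ j + k → u ⟨j, by omega⟩ < u t) →
    invLen (u * wordProd N (List.range' j k)) = invLen u + k ∧
    (∀ t : Fin N, (t.val < j ∨ j + k < t.val) → (u * wordProd N (List.range' j k)) t = u t) ∧
    ((u * wordProd N (List.range' j k)) ⟨j + k, hjk⟩ = u ⟨j, by omega⟩) ∧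
    (∀ (t : Fin N) (_h1 : j ≤ t.val) (h2 : t.val < j + k),
      (u * wordProd N (List.range' j k)) t = u ⟨t.val + 1, by omega⟩) := by
  intro k
  induction k with
  | zero =>
    intro hjk u h
    refine ⟨by simp [wordProd_nil], ?_, ?_, ?_⟩
    · intro t _; simp [wordProd_nil]
    · simp [wordProd_nil]
    · intro t h1 h2; exact absurd h2 (by omega)
  | succ k ih =>
    intro hjk u h
    have hk : j + k < N := by omega
    obtain ⟨ih1, ih2, ih3, ih4⟩ := ih hk u (fun t h1 h2 => h t h1 (by omega))
    have hrw : List.range' j (k + 1) = List.range' j k ++ [j + k] := by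
      have := List.range'_concat (step := 1) (s := j) (n := k)
      simpa using this
    have hprod : u * wordProd N (List.range' j (k + 1))
        = (u * wordProd N (List.range' j k)) * sT N (j + k) := by
      rw [hrw, wordProd_append, wordProd_singleton, mul_assoc]
    set w := u * wordProd N (List.range' j k) with hw
    have hjk1 : (j + k) + 1 < N := by omega
    have hwjk : w ⟨j + k, by omega⟩ = u ⟨j, by omega⟩ := ih3
    have hwjk1 : w ⟨j + k + 1, by omega⟩ = u ⟨j + k + 1, by omega⟩ :=
      ih2 ⟨j + k + 1, by omega⟩ (Or.inr (by simp))
    have hlt : w ⟨j + k, by omega⟩ < w ⟨(j + k) + 1, hjk1⟩ := by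
      rw [hwjk, hwjk1]
      exact h ⟨j + k + 1, by omega⟩ (by show j < j + k + 1; omega) (by show j + k + 1 ≤ j + (k + 1); omega)
    have hsT : sT N (j + k) = Equiv.swap (⟨j + k, by omega⟩ : Fin N) ⟨j + k + 1, hjk1⟩ :=
      sT_eq hjk1
    refine ⟨?_, ?_, ?_, ?_⟩
    · rw [hprod, invLen_mul_sT (j + k) hjk1 w hlt, ih1]; omega
    · intro t ht
      rw [hprod]
      have h1 : t ≠ (⟨j + k, by omega⟩ : Fin N) := by
        intro hc; rw [Fin.ext_iff] at hc; simp at hc; omega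
      have h2 : t ≠ (⟨j + k + 1, by omega⟩ : Fin N) := by
        intro hc; rw [Fin.ext_iff] at hc; simp at hc; omega
      rw [Equiv.Perm.mul_apply, hsT, Equiv.swap_apply_of_ne_of_ne h1 h2]
      refine ih2 t ?_
      rcases ht with ht | ht
      · exact Or.inl ht
      · exact Or.inr (by omega)
    · rw [hprod, Equiv.Perm.mul_apply, hsT]
      have hfin : (⟨j + (k + 1), hjk⟩ : Fin N) = (⟨j + k + 1, hjk1⟩ : Fin N) := rfl
      rw [hfin, Equiv.swap_apply_right]
      exact ih3
    · intro t h1 h2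
      rcases Nat.lt_or_ge t.val (j + k) with hcase | hcase
      · rw [hprod, Equiv.Perm.mul_apply, hsT]
        have hne1 : t ≠ (⟨j + k, by omega⟩ : Fin N) := by
          intro hc; rw [Fin.ext_iff] at hc; simp at hc; omega
        have hne2 : t ≠ (⟨j + k + 1, by omega⟩ : Fin N) := by
          intro hc; rw [Fin.ext_iff] at hc; simp at hc; omega
        rw [Equiv.swap_apply_of_ne_of_ne hne1 hne2]
        exact ih4 t h1 hcase
      · have htv : t = (⟨j + k, hk⟩ : Fin N) := by
          rw [Fin.ext_iff]; simp; omega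
        subst htv
        rw [hprod, Equiv.Perm.mul_apply, hsT, Equiv.swap_apply_left]
        exact hwjk1

def zw (n B d : ℕ) : List ℕ :=
  ((List.range d).map fun s => List.range' (n - 1) (B - s)).flatten

def MonoOn {N : ℕ} (u : Equiv.Perm (Fin N)) (r : ℕ) : Prop :=
  ∀ p q : Fin N, p.val < q.val → q.val < r → u p < u q

lemma zw_succ (n B d : ℕ) :
    zw n B (d + 1) = List.range' (n - 1) B ++ zw n (B - 1) d := by
  unfold zw
  rw [List.range_succ_eq_map, List.map_cons, List.flatten_cons, Nat.sub_zero, List.map_map]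
  congr 1
  congr 1
  apply List.map_congr_left
  intro s _
  simp only [Function.comp_apply]
  congr 1
  omega

lemma z_lemma (N n : ℕ) (hn : 1 ≤ n) :
    ∀ (d B : ℕ), d ≤ B → n + B ≤ N → ∀ (u : Equiv.Perm (Fin N)),
    MonoOn u (n + B) →
    invLen (u * wordProd N (zw n B d)) = invLen u + (zw n B d).length ∧
    MonoOn (u * wordProd N (zw n B d)) (n + B - d) := by
  intro d
  induction d with
  | zero =>
    intro B _ _ u hu
    have hz : zw n B 0 = [] := rfl
    rw [hz, wordProd_nil, mul_one]
    exact ⟨by simp, by simpa using hu⟩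
  | succ d ihd =>
    intro B hd hB u hu
    rw [zw_succ, wordProd_append, ← mul_assoc]
    have hjk : (n - 1) + B < N := by omega
    obtain ⟨m1, m2, m3, m4⟩ := move_lemma N (n - 1) B hjk u
      (fun t ht1 ht2 => hu ⟨n - 1, by omega⟩ t ht1 (by omega))
    set u1 := u * wordProd N (List.range' (n - 1) B) with hu1def
    have hu1 : MonoOn u1 (n + (B - 1)) := by
      intro p q h1 h2
      rcases Nat.lt_or_ge q.val (n - 1) with hq | hq
      · rw [m2 p (Or.inl (by omega)), m2 q (Or.inl hq)]
        exact hu p q h1 (by omega)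
      · rw [m4 q hq (by omega)]
        rcases Nat.lt_or_ge p.val (n - 1) with hp | hp
        · rw [m2 p (Or.inl hp)]
          exact hu p ⟨q.val + 1, by omega⟩ (by simp; omega) (by simp; omega)
        · rw [m4 p hp (by omega)]
          exact hu ⟨p.val + 1, by omega⟩ ⟨q.val + 1, by omega⟩ (by simp; omega) (by simp; omega)
    obtain ⟨z1, z2⟩ := ihd (B - 1) (by omega) (by omega) u1 hu1
    refine ⟨?_, ?_⟩
    · rw [z1, m1, List.length_append, List.length_range']
      omega
    · intro p q h1 h2
      exact z2 p q h1 (by omega)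

lemma phase_lemma (N n c B A : ℕ) (hc : c + 2 ≤ n) (hA : 1 ≤ A) (hAB : A ≤ B)
    (hB : n + B ≤ N) (u : Equiv.Perm (Fin N)) (hu : MonoOn u (n + B)) :
    invLen (u * wordProd N (List.range' c (n - 1 - c) ++ zw n B A)) =
      invLen u + (List.range' c (n - 1 - c) ++ zw n B A).length ∧
    MonoOn (u * wordProd N (List.range' c (n - 1 - c) ++ zw n B A)) (n + B - A) := by
  have hsplit : List.range' c (n - 1 - c) ++ zw n B A
      = List.range' c ((n - 1 - c) + B) ++ zw n (B - 1) (A - 1) := by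
    obtain ⟨A', rfl⟩ : ∃ A', A = A' + 1 := ⟨A - 1, by omega⟩
    rw [zw_succ, ← List.append_assoc]
    congr 1
    have h2 : c + 1 * (n - 1 - c) = n - 1 := by omega
    have h3 := List.range'_append (s := c) (m := n - 1 - c) (n := B) (step := 1)
    rw [h2] at h3
    rw [h3, Nat.add_comm]
  rw [hsplit]
  rw [wordProd_append, ← mul_assoc]
  have hjk : c + ((n - 1 - c) + B) < N := by omega
  obtain ⟨m1, m2, m3, m4⟩ := move_lemma N c ((n - 1 - c) + B) hjk u
    (fun t ht1 ht2 => hu ⟨c, by omega⟩ t ht1 (by omega))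
  set u1 := u * wordProd N (List.range' c ((n - 1 - c) + B)) with hu1def
  have hend : c + ((n - 1 - c) + B) = n - 1 + B := by omega
  have hu1 : MonoOn u1 (n + (B - 1)) := by
    intro p q h1 h2
    rcases Nat.lt_or_ge q.val c with hq | hq
    · rw [m2 p (Or.inl (by omega)), m2 q (Or.inl hq)]
      exact hu p q h1 (by omega)
    · rw [m4 q hq (by omega)]
      rcases Nat.lt_or_ge p.val c with hp | hp
      · rw [m2 p (Or.inl hp)]
        exact hu p ⟨q.val + 1, by omega⟩ (by simp; omega) (by simp; omega)
      · rw [m4 p hp (by omega)]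
        exact hu ⟨p.val + 1, by omega⟩ ⟨q.val + 1, by omega⟩ (by simp; omega) (by simp; omega)
  obtain ⟨z1, z2⟩ := z_lemma N n (by omega) (A - 1) (B - 1) (by omega) (by omega) u1 hu1
  refine ⟨?_, ?_⟩
  · rw [z1, m1, List.length_append, List.length_range']
    omega
  · intro p q h1 h2
    exact z2 p q h1 (by omega)

lemma bsum_succ' (as : ℕ → ℕ) (i : ℕ) : bsum as (i + 1) = bsum as i + as i :=
  Finset.sum_range_succ as i

lemma bsum_le_bsum (as : ℕ → ℕ) {k m : ℕ} (h : k ≤ m) : bsum as k ≤ bsum as m :=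
  Finset.sum_le_sum_of_subset (Finset.range_subset_range.2 h)

lemma top_lemma (N n m : ℕ) (as cs : ℕ → ℕ)
    (hpos : ∀ i < m, 0 < as i) (hcs : ∀ i < m, cs i + 2 ≤ n)
    (hNB : n + bsum as m ≤ N) :
    ∀ q, q ≤ m →
    invLen (wordProd N (((List.range q).map fun t =>
        wbar n cs (m - 1 - t) ++ zbar n as (m - 1 - t)).flatten)) =
      (((List.range q).map fun t =>
        wbar n cs (m - 1 - t) ++ zbar n as (m - 1 - t)).flatten).length ∧
    MonoOn (wordProd N (((List.range q).map fun t =>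
        wbar n cs (m - 1 - t) ++ zbar n as (m - 1 - t)).flatten)) (n + bsum as (m - q)) := by
  intro q
  induction q with
  | zero =>
    intro _
    have h0 : ((List.range 0).map fun t =>
        wbar n cs (m - 1 - t) ++ zbar n as (m - 1 - t)).flatten = ([] : List ℕ) := by
      rw [List.range_zero]; rfl
    rw [h0]
    refine ⟨by rw [wordProd_nil, invLen_one]; rfl, ?_⟩
    intro p q h1 h2
    have e : ∀ x : Fin N, wordProd N [] x = x := fun x => by
      rw [wordProd_nil]; rfl
    rw [e p, e q]
    exact h1
  | succ q ihq =>
    intro hq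
    obtain ⟨ih1, ih2⟩ := ihq (by omega)
    have hxs : ((List.range (q + 1)).map fun t =>
          wbar n cs (m - 1 - t) ++ zbar n as (m - 1 - t)).flatten
        = ((List.range q).map fun t =>
          wbar n cs (m - 1 - t) ++ zbar n as (m - 1 - t)).flatten
          ++ (wbar n cs (m - 1 - q) ++ zbar n as (m - 1 - q)) := by
      rw [List.range_succ, List.map_append, List.flatten_append]
      simp only [List.map_cons, List.map_nil, List.flatten_cons, List.flatten_nil,
        List.append_nil]
    rw [hxs, wordProd_append, List.length_append]
    set i := m - 1 - q with hidef
    have hi : i < m := by omega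
    have hi1 : i + 1 = m - q := by omega
    have hbs : bsum as (i + 1) = bsum as i + as i := bsum_succ' as i
    have hbB : n + bsum as (i + 1) ≤ N := by
      have := bsum_le_bsum as (show i + 1 ≤ m by omega)
      omega
    set u := wordProd N (((List.range q).map fun t =>
        wbar n cs (m - 1 - t) ++ zbar n as (m - 1 - t)).flatten) with hudef
    have hu : MonoOn u (n + bsum as (i + 1)) := by rw [hi1]; exact ih2
    have hword : wbar n cs i ++ zbar n as i
        = List.range' (cs i) (n - 1 - cs i) ++ zw n (bsum as (i + 1)) (as i) := rfl
    obtain ⟨p1, p2⟩ := phase_lemma N n (cs i) (bsum as (i + 1)) (as i)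
      (hcs i hi) (hpos i hi) (by omega) hbB u hu
    constructor
    · rw [← hword] at p1
      rw [p1, ih1]
    · have harith : n + bsum as (i + 1) - as i = n + bsum as (m - (q + 1)) := by
        have : m - (q + 1) = i := by omega
        rw [this]; omega
      rw [← hword] at p2
      rw [← harith]
      exact p2


/-- the word `x̄ = w̄_m z̄_m ⋯ w̄_1 z̄_1` is a reduced expression: the
Coxeter length (number of inversions) of its product `x ∈ S_N` equals its number of
letters. -/
theorem stmt11 (n m : ℕ) (hn : 2 ≤ n) (hm : 1 ≤ m) (as cs : ℕ → ℕ)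
    (hpos : ∀ i < m, 0 < as i) (hcs : ∀ i < m, cs i + 2 ≤ n)
    (N : ℕ) (hN : N = n + bsum as m)
    (hsum : ∑ i ∈ Finset.range m, invLen (wordProd N (wbar n cs i)) = bsum as m) :
    invLen (wordProd N (xbar n m cs as)) = (xbar n m cs as).length := by
  have hNB : n + bsum as m ≤ N := le_of_eq hN.symm
  exact (top_lemma N n m as cs hpos hcs hNB m le_rfl).1
end
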